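/- The kernel of Δ' = x^2 ∂/∂v + xv ∂/∂t + t ∂/∂u on k[x,v,t,u] equals k[h1,h2,h3,h4], where h1 = x, h2 = 2xt − v^2, h3 = 3x^3 u − 3xvt + v^3, and h4 = 8xt^3 + 9x^4 u^2 − 18x^2 t u v − 3t^2 v^2 + 6 x u v^3. -/

import Mathlib

open MvPolynomial

noncomputable section DeltaPrimeAux

set_option linter.unusedSectionVars false
set_option maxHeartbeats 1000000

variable (K : Type*) [Field K] [CharZero K]

/-- `h₂ = 2xt - v²`. -/
def dH2 : MvPolynomial (Fin 4) K := 2 * X 0 * X 2 - X 1 ^ 2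
/-- `h₃ = 3x³u - 3xvt + v³`. -/
def dH3 : MvPolynomial (Fin 4) K :=
  3 * X 0 ^ 3 * X 3 - 3 * X 0 * X 1 * X 2 + X 1 ^ 3
/-- `h₄`. -/
def dH4 : MvPolynomial (Fin 4) K :=
  8 * X 0 * X 2 ^ 3 + 9 * X 0 ^ 4 * X 3 ^ 2
    - 18 * X 0 ^ 2 * X 2 * X 3 * X 1 - 3 * X 2 ^ 2 * X 1 ^ 2
    + 6 * X 0 * X 3 * X 1 ^ 3

lemma dH_rel : dH2 K ^ 3 + dH3 K ^ 2 = X 0 ^ 2 * dH4 K := by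
  simp only [dH2, dH3, dH4]; ring

/-! ### Derivation computations -/

section Derivations

variable {K}
variable (Δ : Derivation K (MvPolynomial (Fin 4) K) (MvPolynomial (Fin 4) K))
  (hΔx : Δ (X 0) = 0) (hΔv : Δ (X 1) = X 0 ^ 2)
  (hΔt : Δ (X 2) = X 0 * X 1) (hΔu : Δ (X 3) = X 2)

lemma dC_mul (k : K) (a : MvPolynomial (Fin 4) K) : Δ (C k * a) = C k * Δ a := by
  rw [← smul_eq_C_mul, Derivation.map_smul, smul_eq_C_mul]

include hΔx hΔv hΔt in
lemma dH2_ker : Δ (dH2 K) = 0 := by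
  have h : dH2 K = C (2:K) * (X 0 * X 2) - X 1 ^ 2 := by
    simp only [dH2, map_ofNat]; ring
  rw [h, map_sub, dC_mul, Derivation.leibniz, Derivation.leibniz_pow,
    hΔx, hΔv, hΔt]
  simp only [smul_eq_mul, nsmul_eq_mul, map_ofNat]
  push_cast
  ring

include hΔx hΔv hΔt hΔu in
lemma dH3_ker : Δ (dH3 K) = 0 := by
  have h : dH3 K = C (3:K) * (X 0 ^ 3 * X 3) - C (3:K) * (X 0 * X 1 * X 2) + X 1 ^ 3 := by
    simp only [dH3, map_ofNat]; ring
  rw [h, map_add, map_sub, dC_mul, dC_mul, Derivation.leibniz, Derivation.leibniz,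
    Derivation.leibniz, Derivation.leibniz_pow, Derivation.leibniz_pow,
    hΔx, hΔv, hΔt, hΔu]
  simp only [smul_eq_mul, nsmul_eq_mul, map_ofNat]
  push_cast
  ring

include hΔx hΔv hΔt hΔu in
lemma dH4_ker : Δ (dH4 K) = 0 := by
  have h : dH4 K = C (8:K) * (X 0 * X 2 ^ 3) + C (9:K) * (X 0 ^ 4 * X 3 ^ 2)
      - C (18:K) * (X 0 ^ 2 * X 2 * X 3 * X 1) - C (3:K) * (X 2 ^ 2 * X 1 ^ 2)
      + C (6:K) * (X 0 * X 3 * X 1 ^ 3) := by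
    simp only [dH4, map_ofNat]; ring
  rw [h]
  rw [map_add, map_sub, map_sub, map_add, dC_mul, dC_mul, dC_mul, dC_mul, dC_mul]
  simp only [Derivation.leibniz, Derivation.leibniz_pow, hΔx, hΔv, hΔt, hΔu,
    smul_eq_mul, nsmul_eq_mul, map_ofNat]
  push_cast
  ring

/-- The kernel of a derivation, as a subalgebra. -/
def dKer : Subalgebra K (MvPolynomial (Fin 4) K) where
  carrier := {f | Δ f = 0}
  mul_mem' := by
    intro a b ha hb
    simp only [Set.mem_setOf_eq] at *
    rw [Derivation.leibniz, ha, hb, smul_zero, smul_zero, add_zero]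
  add_mem' := by
    intro a b ha hb
    simp only [Set.mem_setOf_eq] at *
    rw [map_add, ha, hb, add_zero]
  algebraMap_mem' := by
    intro k
    simp only [Set.mem_setOf_eq, Derivation.map_algebraMap]

end Derivations

/-! ### The substitution homomorphisms -/

def dSig3 : MvPolynomial (Fin 4) K →ₐ[K] MvPolynomial (Fin 4) K :=
  aeval ![X 0, X 1, dH2 K, dH3 K]
def dSig4 : MvPolynomial (Fin 4) K →ₐ[K] MvPolynomial (Fin 4) K :=
  aeval ![X 0, dH2 K, dH3 K, dH4 K]
def dEps : MvPolynomial (Fin 4) K →ₐ[K] MvPolynomial (Fin 4) K :=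
  aeval ![0, X 1, X 2, X 3]
def dEta : MvPolynomial (Fin 4) K →ₐ[K] MvPolynomial (Fin 4) K :=
  aeval ![0, -X 1 ^ 2, X 1 ^ 3, -3 * X 2 ^ 2 * X 1 ^ 2]
def dIota : MvPolynomial (Fin 2) K →ₐ[K] MvPolynomial (Fin 4) K :=
  aeval ![X 1, X 3]
def dMu'' : MvPolynomial (Fin 2) K →ₐ[K] MvPolynomial (Fin 4) K :=
  aeval ![-X 1, -3 * X 2 * X 1]
def dOmega : MvPolynomial (Fin 4) K →ₐ[K] MvPolynomial (Fin 4) K :=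
  aeval ![X 0, -X 1, X 2, X 3]
def dMu : MvPolynomial (Fin 2) K →ₐ[K] MvPolynomial (Fin 4) K :=
  (dEta K).comp (dIota K)

@[simp] lemma dSig3_X0 : dSig3 K (X 0) = X 0 := by simp [dSig3]
@[simp] lemma dSig3_X1 : dSig3 K (X 1) = X 1 := by simp [dSig3]
@[simp] lemma dSig3_X2 : dSig3 K (X 2) = dH2 K := by simp [dSig3]
@[simp] lemma dSig3_X3 : dSig3 K (X 3) = dH3 K := by simp [dSig3]
@[simp] lemma dSig4_X0 : dSig4 K (X 0) = X 0 := by simp [dSig4]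
@[simp] lemma dSig4_X1 : dSig4 K (X 1) = dH2 K := by simp [dSig4]
@[simp] lemma dSig4_X2 : dSig4 K (X 2) = dH3 K := by simp [dSig4]
@[simp] lemma dSig4_X3 : dSig4 K (X 3) = dH4 K := by simp [dSig4]
@[simp] lemma dEps_X0 : dEps K (X 0) = 0 := by simp [dEps]
@[simp] lemma dEps_X1 : dEps K (X 1) = X 1 := by simp [dEps]
@[simp] lemma dEps_X2 : dEps K (X 2) = X 2 := by simp [dEps]
@[simp] lemma dEps_X3 : dEps K (X 3) = X 3 := by simp [dEps]
@[simp] lemma dEta_X0 : dEta K (X 0) = 0 := by simp [dEta]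
@[simp] lemma dEta_X1 : dEta K (X 1) = -X 1 ^ 2 := by simp [dEta]
@[simp] lemma dEta_X2 : dEta K (X 2) = X 1 ^ 3 := by simp [dEta]
@[simp] lemma dEta_X3 : dEta K (X 3) = -3 * X 2 ^ 2 * X 1 ^ 2 := by simp [dEta]
@[simp] lemma dIota_X0 : dIota K (X 0) = X 1 := by simp [dIota]
@[simp] lemma dIota_X1 : dIota K (X 1) = X 3 := by simp [dIota]
@[simp] lemma dMu''_X0 : dMu'' K (X 0) = -X 1 := by simp [dMu'']
@[simp] lemma dMu''_X1 : dMu'' K (X 1) = -3 * X 2 * X 1 := by simp [dMu'']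
@[simp] lemma dOmega_X0 : dOmega K (X 0) = X 0 := by simp [dOmega]
@[simp] lemma dOmega_X1 : dOmega K (X 1) = -X 1 := by simp [dOmega]
@[simp] lemma dOmega_X2 : dOmega K (X 2) = X 2 := by simp [dOmega]
@[simp] lemma dOmega_X3 : dOmega K (X 3) = X 3 := by simp [dOmega]
@[simp] lemma dMu_X0 : dMu K (X 0) = -X 1 ^ 2 := by simp [dMu]
@[simp] lemma dMu_X1 : dMu K (X 1) = -3 * X 2 ^ 2 * X 1 ^ 2 := by
  simp only [dMu, AlgHom.comp_apply, dIota_X1, dEta_X3]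

/-! ### Injectivity of the substitution homomorphisms -/

lemma dSig3_injective : Function.Injective (dSig3 K) := by
  set F := FractionRing (MvPolynomial (Fin 4) K)
  let i : MvPolynomial (Fin 4) K →+* F := algebraMap _ _
  have hi : Function.Injective i := IsFractionRing.injective _ _
  have hx0 : (i (X 0) : F) ≠ 0 := by
    simp only [ne_eq, map_eq_zero_iff i hi]
    exact X_ne_zero 0
  let ρ : MvPolynomial (Fin 4) K →ₐ[K] F :=
    aeval ![i (X 0), i (X 1), (i (X 2) + i (X 1) ^ 2) / (2 * i (X 0)),
      (2 * i (X 3) + 3 * i (X 1) * i (X 2) + i (X 1) ^ 3) / (6 * i (X 0) ^ 3)]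
  have hcomp : ∀ f, ρ (dSig3 K f) = i f := by
    have : ρ.comp (dSig3 K) = (IsScalarTower.toAlgHom K (MvPolynomial (Fin 4) K) F) := by
      apply MvPolynomial.algHom_ext
      intro j
      have hj : j = 0 ∨ j = 1 ∨ j = 2 ∨ j = 3 := by omega
      rcases hj with rfl | rfl | rfl | rfl <;>
        simp only [AlgHom.comp_apply, dSig3_X0, dSig3_X1, dSig3_X2, dSig3_X3,
          IsScalarTower.toAlgHom_apply, dH2, dH3, ρ, map_sub, map_add, map_mul,
          map_pow, map_ofNat, aeval_X, Matrix.cons_val_zero, Matrix.cons_val_one,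
          Matrix.head_cons, Matrix.cons_val_two, Matrix.tail_cons,
          Matrix.cons_val_three] <;>
        (try change _ = i _) <;> (try simp only [F] at *) <;> (try field_simp) <;> (try ring)
    intro f
    exact congrArg (fun g => g f) (congrArg DFunLike.coe this)
  intro f g hfg
  apply hi
  rw [← hcomp f, ← hcomp g, hfg]

lemma my_expand_monomial {σ A : Type*} [CommSemiring A] {n : ℕ} (hn : n ≠ 0)
    (d : σ →₀ ℕ) (r : A) :
    expand n (monomial d r) = monomial (n • d) r := by
  rw [expand_monomial, monomial_eq, Finsupp.prod]

lemma my_coeff_expand {σ A : Type*} [CommSemiring A] {n : ℕ} (hn : n ≠ 0)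
    (f : MvPolynomial σ A) (m : σ →₀ ℕ) :
    coeff (n • m) (expand n f) = coeff m f := by
  classical
  induction f using MvPolynomial.induction_on' with
  | monomial d r =>
    rw [my_expand_monomial hn, coeff_monomial, coeff_monomial]
    by_cases hdm : d = m
    · simp [hdm]
    · rw [if_neg, if_neg hdm]
      intro hc
      apply hdm
      ext i
      have := DFunLike.congr_fun hc i
      simp only [Finsupp.smul_apply, smul_eq_mul] at this
      exact Nat.eq_of_mul_eq_mul_left (Nat.pos_of_ne_zero hn) this
  | add p q hp hq => simp [map_add, coeff_add, hp, hq]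

lemma my_expand_injective {σ A : Type*} [CommSemiring A] {n : ℕ} (hn : n ≠ 0) :
    Function.Injective (expand (σ := σ) (R := A) n) := by
  intro f g h
  ext m
  rw [← my_coeff_expand hn f m, ← my_coeff_expand hn g m, h]

lemma dMu''_injective : Function.Injective (dMu'' K) := by
  set F := FractionRing (MvPolynomial (Fin 2) K)
  let i : MvPolynomial (Fin 2) K →+* F := algebraMap _ _
  have hi : Function.Injective i := IsFractionRing.injective _ _
  have hx0 : (i (X 0) : F) ≠ 0 := by
    simp only [ne_eq, map_eq_zero_iff i hi]
    exact X_ne_zero 0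
  let χ : MvPolynomial (Fin 4) K →ₐ[K] F :=
    aeval ![0, -(i (X 0)), i (X 1) / (3 * i (X 0)), 0]
  have hcomp : ∀ f, χ (dMu'' K f) = i f := by
    have : χ.comp (dMu'' K) = (IsScalarTower.toAlgHom K (MvPolynomial (Fin 2) K) F) := by
      apply MvPolynomial.algHom_ext
      intro j
      have hj : j = 0 ∨ j = 1 := by omega
      rcases hj with rfl | rfl <;>
        simp only [AlgHom.comp_apply, dMu''_X0, dMu''_X1,
          IsScalarTower.toAlgHom_apply, χ, map_neg, map_mul, map_ofNat, aeval_X,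
          Matrix.cons_val_zero, Matrix.cons_val_one, Matrix.head_cons,
          Matrix.cons_val_two, Matrix.tail_cons] <;>
        (try change _ = i _) <;> (try simp only [F] at *) <;> (try field_simp) <;> (try ring)
    intro f
    exact congrArg (fun g => g f) (congrArg DFunLike.coe this)
  intro f g hfg
  apply hi
  rw [← hcomp f, ← hcomp g, hfg]

lemma dMu_eq : dMu K = (expand 2).comp (dMu'' K) := by
  apply MvPolynomial.algHom_ext
  intro j
  have hj : j = 0 ∨ j = 1 := by omega
  rcases hj with rfl | rfl <;>
    simp only [dMu_X0, dMu_X1, AlgHom.comp_apply, dMu''_X0, dMu''_X1,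
      map_neg, map_mul, map_ofNat, expand_X] <;> ring

lemma dMu_injective : Function.Injective (dMu K) := by
  rw [dMu_eq]
  exact (my_expand_injective two_ne_zero).comp (dMu''_injective K)

/-! ### Division with remainder modulo `x` and modulo `Z² + Y³` -/

lemma X0_dvd_sub_dEps (P : MvPolynomial (Fin 4) K) : X 0 ∣ P - dEps K P := by
  induction P using MvPolynomial.induction_on with
  | C a => simp [algHom_C]
  | add p q hp hq =>
    have : p + q - dEps K (p + q) = (p - dEps K p) + (q - dEps K q) := by
      rw [map_add]; ring
    rw [this]; exact dvd_add hp hq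
  | mul_X p i hp =>
    have hi : i = 0 ∨ i = 1 ∨ i = 2 ∨ i = 3 := by omega
    rw [map_mul]
    rcases hi with rfl | rfl | rfl | rfl
    · rw [dEps_X0, mul_zero, sub_zero]; exact Dvd.intro_left p rfl
    · rw [dEps_X1]; exact (sub_mul p (dEps K p) (X 1)) ▸ hp.mul_right _
    · rw [dEps_X2]; exact (sub_mul p (dEps K p) (X 2)) ▸ hp.mul_right _
    · rw [dEps_X3]; exact (sub_mul p (dEps K p) (X 3)) ▸ hp.mul_right _

lemma dDecomp (Q : MvPolynomial (Fin 4) K) :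
    ∃ (c : MvPolynomial (Fin 4) K) (a b : MvPolynomial (Fin 2) K),
      dEps K Q = c * (X 2 ^ 2 + X 1 ^ 3) + dIota K a + dIota K b * X 2 := by
  induction Q using MvPolynomial.induction_on with
  | C r =>
    refine ⟨0, C r, 0, ?_⟩
    simp [algHom_C]
  | add p q hp hq =>
    obtain ⟨c1, a1, b1, h1⟩ := hp
    obtain ⟨c2, a2, b2, h2⟩ := hq
    refine ⟨c1 + c2, a1 + a2, b1 + b2, ?_⟩
    rw [map_add, h1, h2, map_add, map_add]
    ring
  | mul_X p i hp =>
    obtain ⟨c, a, b, h⟩ := hp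
    have hi : i = 0 ∨ i = 1 ∨ i = 2 ∨ i = 3 := by omega
    rw [map_mul]
    rcases hi with rfl | rfl | rfl | rfl
    · refine ⟨0, 0, 0, ?_⟩
      rw [dEps_X0, mul_zero]
      simp
    · refine ⟨c * X 1, a * X 0, b * X 0, ?_⟩
      rw [dEps_X1, h, map_mul, map_mul, dIota_X0]
      ring
    · refine ⟨c * X 2 + dIota K b, -(b * X 0 ^ 3), a, ?_⟩
      rw [dEps_X2, h, map_neg, map_mul, map_pow, dIota_X0]
      ring
    · refine ⟨c * X 3, a * X 1, b * X 1, ?_⟩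
      rw [dEps_X3, h, map_mul, map_mul, dIota_X1]
      ring

lemma dEta_comp_dEps (Q : MvPolynomial (Fin 4) K) : dEta K (dEps K Q) = dEta K Q := by
  have : (dEta K).comp (dEps K) = dEta K := by
    apply MvPolynomial.algHom_ext
    intro j
    have hj : j = 0 ∨ j = 1 ∨ j = 2 ∨ j = 3 := by omega
    rcases hj with rfl | rfl | rfl | rfl <;> simp
  exact congrArg (fun g => g Q) (congrArg DFunLike.coe this)

lemma dOmega_comp_dMu (a : MvPolynomial (Fin 2) K) :
    dOmega K (dMu K a) = dMu K a := by
  have : (dOmega K).comp (dMu K) = dMu K := by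
    apply MvPolynomial.algHom_ext
    intro j
    have hj : j = 0 ∨ j = 1 := by omega
    rcases hj with rfl | rfl <;> simp [map_ofNat] <;> ring
  exact congrArg (fun g => g a) (congrArg DFunLike.coe this)

lemma dL {Q : MvPolynomial (Fin 4) K} (hQ : dEta K Q = 0) :
    ∃ c : MvPolynomial (Fin 4) K, dEps K Q = c * (X 2 ^ 2 + X 1 ^ 3) := by
  obtain ⟨c, a, b, hd⟩ := dDecomp K Q
  have h1 : dEta K (dEps K Q) = 0 := by rw [dEta_comp_dEps, hQ]
  rw [hd] at h1
  have hg : dEta K (X 2 ^ 2 + X 1 ^ 3 : MvPolynomial (Fin 4) K) = 0 := by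
    simp only [map_add, map_pow, dEta_X2, dEta_X1]
    ring
  have h2 : dMu K a + dMu K b * X 1 ^ 3 = 0 := by
    have := h1
    rw [map_add, map_add, map_mul, hg, mul_zero, map_mul, dEta_X2] at this
    simpa [dMu] using this
  have h3 : dMu K a - dMu K b * X 1 ^ 3 = 0 := by
    have := congrArg (dOmega K) h2
    rw [map_add, map_mul, map_pow, dOmega_X1, map_zero,
      dOmega_comp_dMu, dOmega_comp_dMu] at this
    calc dMu K a - dMu K b * X 1 ^ 3
        = dMu K a + dMu K b * (-X 1) ^ 3 := by ring
      _ = 0 := this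
  have ha : dMu K a = 0 := by
    have : dMu K a + dMu K a = 0 := by linear_combination h2 + h3
    have h4 : (2 : MvPolynomial (Fin 4) K) * dMu K a = 0 := by linear_combination this
    rcases mul_eq_zero.mp h4 with h | h
    · exact absurd h two_ne_zero
    · exact h
  have hb : dMu K b = 0 := by
    have h5 : dMu K b * X 1 ^ 3 = 0 := by linear_combination h2 - ha
    rcases mul_eq_zero.mp h5 with h | h
    · exact h
    · exact absurd h (pow_ne_zero _ (X_ne_zero 1))
  have ha0 : a = 0 := dMu_injective K (by simp [ha])
  have hb0 : b = 0 := dMu_injective K (by simp [hb])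
  refine ⟨c, ?_⟩
  rw [hd, ha0, hb0]
  simp

/-! ### The descent lemma -/

lemma dEps_dSig4 (P : MvPolynomial (Fin 4) K) : dEps K (dSig4 K P) = dEta K P := by
  have : (dEps K).comp (dSig4 K) = dEta K := by
    apply MvPolynomial.algHom_ext
    intro j
    have hj : j = 0 ∨ j = 1 ∨ j = 2 ∨ j = 3 := by omega
    rcases hj with rfl | rfl | rfl | rfl <;>
      simp only [AlgHom.comp_apply, dSig4_X0, dSig4_X1, dSig4_X2, dSig4_X3,
        dEps_X0, dEta_X0, dEta_X1, dEta_X2, dEta_X3, dH2, dH3, dH4,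
        map_sub, map_add, map_mul, map_pow, map_ofNat, dEps_X1, dEps_X2, dEps_X3] <;>
      ring
  exact congrArg (fun g => g P) (congrArg DFunLike.coe this)

lemma dDescend (g : MvPolynomial (Fin 4) K) (h : X 0 * g ∈ (dSig4 K).range) :
    g ∈ (dSig4 K).range := by
  obtain ⟨P, hP0⟩ := h
  have hP : dSig4 K P = X 0 * g := hP0
  obtain ⟨P1, hP1⟩ := X0_dvd_sub_dEps K P
  have hEtaP : dEta K P = 0 := by
    rw [← dEps_dSig4, hP, map_mul, dEps_X0, zero_mul]
  obtain ⟨c, hc⟩ := dL K hEtaP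
  have e1 : dSig4 K P - dSig4 K (dEps K P) = X 0 * dSig4 K P1 := by
    rw [← map_sub, hP1, map_mul, dSig4_X0]
  have e2 : dSig4 K (dEps K P) = dSig4 K c * (dH3 K ^ 2 + dH2 K ^ 3) := by
    rw [hc, map_mul, map_add, map_pow, map_pow, dSig4_X2, dSig4_X1]
  have key : X 0 * g = X 0 * (dSig4 K P1 + dSig4 K c * (X 0 * dH4 K)) := by
    linear_combination -hP + e1 + e2 + dSig4 K c * dH_rel K
  have hcancel := mul_left_cancel₀ (X_ne_zero (0 : Fin 4)) key
  refine ⟨P1 + c * (X 0 * X 3), ?_⟩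
  show dSig4 K (P1 + c * (X 0 * X 3)) = g
  rw [map_add, map_mul, map_mul, dSig4_X0, dSig4_X3]
  exact hcancel.symm

/-! ### The key derivation identity and clearing of denominators -/

section Derivations2

variable {K}
variable (Δ : Derivation K (MvPolynomial (Fin 4) K) (MvPolynomial (Fin 4) K))
  (hΔx : Δ (X 0) = 0) (hΔv : Δ (X 1) = X 0 ^ 2)
  (hΔt : Δ (X 2) = X 0 * X 1) (hΔu : Δ (X 3) = X 2)

include hΔx hΔv hΔt hΔu in
lemma dKey (F : MvPolynomial (Fin 4) K) :
    Δ (dSig3 K F) = X 0 ^ 2 * dSig3 K (pderiv 1 F) := by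
  induction F using MvPolynomial.induction_on with
  | C a =>
    rw [algHom_C, Derivation.map_algebraMap, pderiv_C, map_zero, mul_zero]
  | add p q hp hq =>
    rw [map_add, map_add, hp, hq, map_add, map_add]
    ring
  | mul_X p i hp =>
    have hi : i = 0 ∨ i = 1 ∨ i = 2 ∨ i = 3 := by omega
    rw [map_mul, Derivation.leibniz, smul_eq_mul, smul_eq_mul, hp,
      pderiv_mul, map_add, map_mul, map_mul]
    rcases hi with rfl | rfl | rfl | rfl
    · rw [dSig3_X0, hΔx, pderiv_X_of_ne (by decide : (0 : Fin 4) ≠ 1), map_zero]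
      ring
    · rw [dSig3_X1, hΔv, pderiv_X_self, map_one]
      ring
    · rw [dSig3_X2, dH2_ker Δ hΔx hΔv hΔt,
        pderiv_X_of_ne (by decide : (2 : Fin 4) ≠ 1), map_zero]
      ring
    · rw [dSig3_X3, dH3_ker Δ hΔx hΔv hΔt hΔu,
        pderiv_X_of_ne (by decide : (3 : Fin 4) ≠ 1), map_zero]
      ring

end Derivations2

lemma dClear (f : MvPolynomial (Fin 4) K) :
    ∃ (N : ℕ) (F : MvPolynomial (Fin 4) K), X 0 ^ N * f = dSig3 K F := by
  induction f using MvPolynomial.induction_on with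
  | C a => exact ⟨0, C a, by simp [algHom_C]⟩
  | add p q hp hq =>
    obtain ⟨N, F1, h1⟩ := hp
    obtain ⟨M, F2, h2⟩ := hq
    refine ⟨N + M, X 0 ^ M * F1 + X 0 ^ N * F2, ?_⟩
    rw [map_add, map_mul, map_mul, map_pow, map_pow, dSig3_X0, ← h1, ← h2]
    ring
  | mul_X p i hp =>
    obtain ⟨N, F, hF⟩ := hp
    have hi : i = 0 ∨ i = 1 ∨ i = 2 ∨ i = 3 := by omega
    rcases hi with rfl | rfl | rfl | rfl
    · exact ⟨N, F * X 0, by rw [map_mul, dSig3_X0, ← hF]; ring⟩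
    · exact ⟨N, F * X 1, by rw [map_mul, dSig3_X1, ← hF]; ring⟩
    · refine ⟨N + 1, C (2⁻¹ : K) * F * (X 2 + X 1 ^ 2), ?_⟩
      have h2 : (C (2⁻¹ : K) : MvPolynomial (Fin 4) K) * 2 = 1 := by
        rw [show ((2 : MvPolynomial (Fin 4) K)) = C (2 : K) from (map_ofNat C 2).symm,
          ← map_mul, inv_mul_cancel₀ (two_ne_zero), map_one]
      rw [map_mul, map_mul, algHom_C, map_add, dSig3_X2, map_pow, dSig3_X1, ← hF,
        MvPolynomial.algebraMap_eq]
      simp only [dH2]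
      linear_combination (-(X 0 ^ N * X 0 * p * X 2)) * h2
    · refine ⟨N + 3, C (6⁻¹ : K) * F * (2 * X 3 + 3 * X 1 * X 2 + X 1 ^ 3), ?_⟩
      have h6 : (C (6⁻¹ : K) : MvPolynomial (Fin 4) K) * 6 = 1 := by
        rw [show ((6 : MvPolynomial (Fin 4) K)) = C (6 : K) from (map_ofNat C 6).symm,
          ← map_mul, inv_mul_cancel₀ (by norm_num : (6:K) ≠ 0), map_one]
      rw [map_mul, map_mul, algHom_C, map_add, map_add, map_mul, map_mul, map_mul,
        dSig3_X3, dSig3_X1, dSig3_X2, map_pow, dSig3_X1, ← hF,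
        MvPolynomial.algebraMap_eq]
      rw [show dSig3 K 2 = 2 from map_ofNat _ 2, show dSig3 K 3 = 3 from map_ofNat _ 3]
      simp only [dH2, dH3]
      linear_combination (-(X 0 ^ N * X 0 ^ 3 * p * X 3)) * h6

lemma dNoV {F : MvPolynomial (Fin 4) K} (h : pderiv (1 : Fin 4) F = 0) :
    F ∈ supported K ({0, 2, 3} : Set (Fin 4)) := by
  classical
  rw [mem_supported]
  intro i hi
  have hi4 : i = 1 ∨ i = 0 ∨ i = 2 ∨ i = 3 := by omega
  rcases hi4 with rfl | rfl | rfl | rfl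
  · exfalso
    obtain ⟨m, hm, h1m⟩ := (mem_vars _).mp hi
    have hm1 : m 1 ≠ 0 := Finsupp.mem_support_iff.mp h1m
    have hF : pderiv (1 : Fin 4) F =
        ∑ s ∈ F.support, monomial (s - Finsupp.single 1 1) (F.coeff s * s 1) := by
      conv_lhs => rw [← F.support_sum_monomial_coeff]
      rw [map_sum]
      exact Finset.sum_congr rfl fun s _ => pderiv_monomial
    have hcoeff : coeff (m - Finsupp.single 1 1) (pderiv (1 : Fin 4) F)
        = F.coeff m * m 1 := by
      rw [hF, coeff_sum]
      rw [Finset.sum_eq_single m]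
      · rw [coeff_monomial, if_pos rfl]
      · intro s hs hsm
        rw [coeff_monomial]
        by_cases hs1 : s 1 = 0
        · simp [hs1]
        · rw [if_neg]
          intro hc
          apply hsm
          ext j
          have hj := DFunLike.congr_fun hc j
          simp only [Finsupp.tsub_apply, Finsupp.single_apply] at hj
          by_cases hj1 : j = 1
          · subst hj1; simp only [if_pos rfl, if_true, eq_self_iff_true] at hj; omega
          · have : (1 : Fin 4) ≠ j := fun hh => hj1 hh.symm
            simp only [if_neg this] at hj; omega
      · intro hmm; exact absurd hm hmm
    rw [h, coeff_zero] at hcoeff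
    have h1 : F.coeff m ≠ 0 := Finsupp.mem_support_iff.mp hm
    have h2 : ((m 1 : K)) ≠ 0 := Nat.cast_ne_zero.mpr hm1
    exact mul_ne_zero h1 h2 hcoeff.symm
  · simp
  · simp
  · simp

end DeltaPrimeAux

theorem kernel_of_Delta_prime
    (K : Type*) [Field K] [CharZero K]
    (Δ' : Derivation K (MvPolynomial (Fin 4) K) (MvPolynomial (Fin 4) K))
    (hΔx : Δ' (X 0) = 0) (hΔv : Δ' (X 1) = X 0 ^ 2)
    (hΔt : Δ' (X 2) = X 0 * X 1) (hΔu : Δ' (X 3) = X 2) :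
    ∀ f : MvPolynomial (Fin 4) K,
      Δ' f = 0 ↔
        f ∈ Algebra.adjoin K
          ({X 0,
            2 * X 0 * X 2 - X 1 ^ 2,
            3 * X 0 ^ 3 * X 3 - 3 * X 0 * X 1 * X 2 + X 1 ^ 3,
            8 * X 0 * X 2 ^ 3 + 9 * X 0 ^ 4 * X 3 ^ 2
              - 18 * X 0 ^ 2 * X 2 * X 3 * X 1 - 3 * X 2 ^ 2 * X 1 ^ 2
              + 6 * X 0 * X 3 * X 1 ^ 3} :
            Set (MvPolynomial (Fin 4) K)) := by
  intro f
  show Δ' f = 0 ↔ f ∈ Algebra.adjoin K ({X 0, dH2 K, dH3 K, dH4 K} :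
    Set (MvPolynomial (Fin 4) K))
  have hrange : Algebra.adjoin K ({X 0, dH2 K, dH3 K, dH4 K} :
      Set (MvPolynomial (Fin 4) K)) = (dSig4 K).range := by
    have hset : ({X 0, dH2 K, dH3 K, dH4 K} : Set (MvPolynomial (Fin 4) K))
        = Set.range ![X 0, dH2 K, dH3 K, dH4 K] := by
      ext y
      simp [Matrix.range_cons, Matrix.range_cons_empty]
      constructor <;> rintro (h | h | h | h) <;> simp only [h, true_or, or_true]
    rw [hset, Algebra.adjoin_range_eq_range_aeval]
    rfl
  constructor
  · -- the hard direction
    intro hf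
    obtain ⟨N, F, hNF⟩ := dClear K f
    have hΔσ : Δ' (dSig3 K F) = 0 := by
      rw [← hNF, Derivation.leibniz, hf, Derivation.leibniz_pow, hΔx]
      simp
    have h2 : X 0 ^ 2 * dSig3 K (pderiv 1 F) = 0 := by
      rw [← dKey Δ' hΔx hΔv hΔt hΔu F]
      exact hΔσ
    have h3 : pderiv (1 : Fin 4) F = 0 := by
      rcases mul_eq_zero.mp h2 with h | h
      · exact absurd h (pow_ne_zero _ (X_ne_zero 0))
      · exact dSig3_injective K (by rw [h, map_zero])
    have h4 : F ∈ supported K ({0, 2, 3} : Set (Fin 4)) := dNoV K h3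
    have h5 : dSig3 K F ∈ Algebra.adjoin K ({X 0, dH2 K, dH3 K, dH4 K} :
        Set (MvPolynomial (Fin 4) K)) := by
      rw [supported_eq_adjoin_X] at h4
      have h6 : dSig3 K F ∈ (Algebra.adjoin K
          ((X : Fin 4 → MvPolynomial (Fin 4) K) '' {0, 2, 3})).map (dSig3 K) :=
        ⟨F, h4, rfl⟩
      rw [AlgHom.map_adjoin] at h6
      refine Algebra.adjoin_mono ?_ h6
      rintro y ⟨x, ⟨i, hi, rfl⟩, rfl⟩
      simp only [Set.mem_insert_iff, Set.mem_singleton_iff] at hi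
      rcases hi with rfl | rfl | rfl
      · rw [dSig3_X0]; simp
      · rw [dSig3_X2]; simp
      · rw [dSig3_X3]; simp
    have h7 : X 0 ^ N * f ∈ (dSig4 K).range := by
      rw [← hrange, hNF]
      exact h5
    have hdesc : ∀ (n : ℕ) (g : MvPolynomial (Fin 4) K),
        X 0 ^ n * g ∈ (dSig4 K).range → g ∈ (dSig4 K).range := by
      intro n
      induction n with
      | zero => intro g hg; simpa using hg
      | succ n ih =>
        intro g hg
        apply dDescend
        apply ih
        rw [show X 0 ^ n * (X 0 * g) = X 0 ^ (n + 1) * g by ring]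
        exact hg
    rw [hrange]
    exact hdesc N f h7
  · intro hf
    have hker : Algebra.adjoin K ({X 0, dH2 K, dH3 K, dH4 K} :
        Set (MvPolynomial (Fin 4) K)) ≤ dKer Δ' := by
      apply Algebra.adjoin_le
      rintro g hg
      simp only [Set.mem_insert_iff, Set.mem_singleton_iff] at hg
      rcases hg with rfl | rfl | rfl | rfl
      · exact hΔx
      · exact dH2_ker Δ' hΔx hΔv hΔt
      · exact dH3_ker Δ' hΔx hΔv hΔt hΔu
      · exact dH4_ker Δ' hΔx hΔv hΔt hΔu
    exact hker hf
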